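/- Let c₁, …, c_r be positive integers and define d_i = gcd over all size-i subsets S of {1,…,r} of ∏_{j∈S} c_j, with d₀ = 1, and N = lcm(cᵢ). Then ℤ/Nℤ ⊕ ⨁_{i=1}^{r−1} ℤ/(d_i/d_{i−1})ℤ ≅ ⨁_{i=1}^{r} ℤ/cᵢℤ as abelian groups. -/

import Mathlib

/-- `d i` is the gcd over all size-`i` subsets `S` of `{1,…,r}` of `∏_{j∈S} c j`
(so `d 0 = 1`, being the gcd of the empty product). -/
def subsetGcd {r : ℕ} (c : Fin r → ℕ) (i : ℕ) : ℕ :=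
  ((Finset.univ : Finset (Fin r)).powersetCard i).gcd fun S => ∏ j ∈ S, c j

namespace Stmt17Aux

open Finset

/-- A strictly monotone map `Fin k → Fin r` satisfies `i ≤ t i` (on values). -/
lemma le_val_of_strictMono {k r : ℕ} {t : Fin k → Fin r} (ht : StrictMono t) :
    ∀ n (i : Fin k), i.val = n → n ≤ (t i).val := by
  intro n
  induction n with
  | zero => exact fun i _ => Nat.zero_le _
  | succ n ih =>
    intro i hi
    have hn : n < k := by omega
    have h1 : n ≤ (t ⟨n, hn⟩).val := ih ⟨n, hn⟩ rfl
    have h2 : t ⟨n, hn⟩ < t i := ht (by simp [Fin.lt_def, hi])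
    have h3 := Fin.lt_def.mp h2
    omega

/-- For a monotone `g`, the sum of `g` over any `k`-element subset is at least the
sum of the first `k` values. -/
lemma sum_firstk_le {r k : ℕ} {g : Fin r → ℕ} (hg : Monotone g) (hk : k ≤ r)
    (S : Finset (Fin r)) (hS : S.card = k) :
    ∑ i : Fin k, g (Fin.castLE hk i) ≤ ∑ j ∈ S, g j := by
  have hrange : S = Finset.image (S.orderEmbOfFin hS) Finset.univ := by
    ext x
    simp only [Finset.mem_image, Finset.mem_univ, true_and]
    rw [← Set.mem_range, Finset.range_orderEmbOfFin S hS, Finset.mem_coe]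
  rw [hrange, Finset.sum_image (fun a _ b _ h => (S.orderEmbOfFin hS).injective h)]
  apply Finset.sum_le_sum
  intro i _
  apply hg
  have := le_val_of_strictMono (S.orderEmbOfFin hS).strictMono i.val i rfl
  exact Fin.le_def.mpr (by simpa using this)

variable {r : ℕ} (c : Fin r → ℕ)

lemma subsetGcd_dvd (hc : ∀ i, 0 < c i) {k : ℕ} {S : Finset (Fin r)} (hS : S.card = k) :
    subsetGcd c k ∣ ∏ j ∈ S, c j :=
  Finset.gcd_dvd (Finset.mem_powersetCard.mpr ⟨Finset.subset_univ _, hS⟩)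

lemma subsetGcd_ne_zero (hc : ∀ i, 0 < c i) {k : ℕ} (hk : k ≤ r) : subsetGcd c k ≠ 0 := by
  obtain ⟨S, hS⟩ := Finset.powersetCard_nonempty.mpr (show k ≤ (Finset.univ : Finset (Fin r)).card by rw [Finset.card_univ, Fintype.card_fin]; exact hk)
  intro h
  have h0 := Finset.gcd_eq_zero_iff.mp h S hS
  have h1 : 0 < ∏ j ∈ S, c j := Finset.prod_pos fun j _ => hc j
  omega

lemma subsetGcd_dvd_succ (hc : ∀ i, 0 < c i) {k : ℕ} (hk : k + 1 ≤ r) :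
    subsetGcd c k ∣ subsetGcd c (k + 1) := by
  apply Finset.dvd_gcd
  intro S hS
  obtain ⟨hSsub, hScard⟩ := Finset.mem_powersetCard.mp hS
  obtain ⟨T, hT, hTcard⟩ := Finset.exists_subset_card_eq (show k ≤ S.card by omega)
  exact (subsetGcd_dvd c hc hTcard).trans (Finset.prod_dvd_prod_of_subset T S c hT)

/-- factorization of a product of the `c j` over a finset. -/
lemma factorization_prod_apply (hc : ∀ i, 0 < c i) (S : Finset (Fin r)) (p : ℕ) :
    (∏ j ∈ S, c j).factorization p = ∑ j ∈ S, (c j).factorization p := by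
  rw [Nat.factorization_prod fun j _ => (hc j).ne']
  exact Finset.sum_apply' p

/-- An upper bound for the factorization of a finset lcm. -/
lemma factorization_lcm_le {ι : Type*} (s : Finset ι) (f : ι → ℕ)
    (hf : ∀ i ∈ s, f i ≠ 0) (p b : ℕ) (hb : ∀ i ∈ s, (f i).factorization p ≤ b) :
    (s.lcm f).factorization p ≤ b := by
  classical
  induction s using Finset.induction_on with
  | empty => simp
  | @insert a s ha ih =>
    have hfa : f a ≠ 0 := hf a (Finset.mem_insert_self a s)
    have hfs : ∀ i ∈ s, f i ≠ 0 := fun i hi => hf i (Finset.mem_insert_of_mem hi)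
    have hlcm : s.lcm f ≠ 0 := by
      intro h
      rcases Finset.lcm_eq_zero_iff.mp h with ⟨i, hi, hi0⟩
      exact hfs i hi hi0
    rw [Finset.lcm_insert, lcm_eq_nat_lcm, Nat.factorization_lcm hfa hlcm]
    rw [Finsupp.sup_apply]
    exact sup_le (hb a (Finset.mem_insert_self a s))
      (ih hfs fun i hi => hb i (Finset.mem_insert_of_mem hi))

section Prime

variable (p : ℕ)

/-- valuations, and their sorted rearrangement -/
noncomputable def eVal : Fin r → ℕ := fun i => (c i).factorization p

noncomputable def sortPerm : Equiv.Perm (Fin r) := Tuple.sort (eVal c p)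

lemma monotone_sorted : Monotone (eVal c p ∘ sortPerm c p) := Tuple.monotone_sort _

/-- The key valuation formula: `v_p (subsetGcd c k)` is the sum of the `k`
smallest valuations. -/
lemma factorization_subsetGcd (hc : ∀ i, 0 < c i) (hp : p.Prime) {k : ℕ} (hk : k ≤ r) :
    (subsetGcd c k).factorization p
      = ∑ i : Fin k, eVal c p (sortPerm c p (Fin.castLE hk i)) := by
  set e := eVal c p with he
  set σ := sortPerm c p with hσ
  have hg : Monotone (e ∘ σ) := monotone_sorted c p
  set m := ∑ i : Fin k, e (σ (Fin.castLE hk i)) with hm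
  have hub : ∀ S ∈ Finset.univ.powersetCard k, m ≤ (∏ j ∈ S, c j).factorization p := by
    intro S hS
    obtain ⟨-, hScard⟩ := Finset.mem_powersetCard.mp hS
    rw [factorization_prod_apply c hc S p]
    have himg : ∑ j ∈ S, (c j).factorization p
        = ∑ j ∈ S.image σ.symm, (e ∘ σ) j := by
      rw [Finset.sum_image fun a _ b _ h => σ.symm.injective h]
      refine Finset.sum_congr rfl fun j _ => ?_
      simp [he, eVal]
    rw [himg]
    have hcard : (S.image σ.symm).card = k := by
      rw [Finset.card_image_of_injective _ σ.symm.injective, hScard]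
    exact sum_firstk_le hg hk _ hcard
  -- lower bound: m ≤ v_p (subsetGcd c k)
  have hdvd : p ^ m ∣ subsetGcd c k := by
    apply Finset.dvd_gcd
    intro S hS
    have hprod : (∏ j ∈ S, c j) ≠ 0 :=
      (Finset.prod_pos fun j _ => hc j).ne'
    exact (Nat.Prime.pow_dvd_iff_le_factorization hp hprod).mpr (hub S hS)
  have hle1 : m ≤ (subsetGcd c k).factorization p :=
    (Nat.Prime.pow_dvd_iff_le_factorization hp (subsetGcd_ne_zero c hc hk)).mp hdvd
  -- upper bound via the witness subset
  set S₀ := Finset.image (fun i : Fin k => σ (Fin.castLE hk i)) Finset.univ with hS₀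
  have hinj : Function.Injective fun i : Fin k => σ (Fin.castLE hk i) :=
    fun a b h => Fin.castLE_injective hk (σ.injective h)
  have hS₀card : S₀.card = k := by
    rw [hS₀, Finset.card_image_of_injective _ hinj, Finset.card_univ, Fintype.card_fin]
  have hdvd2 : subsetGcd c k ∣ ∏ j ∈ S₀, c j := subsetGcd_dvd c hc hS₀card
  have hle2 : (subsetGcd c k).factorization p ≤ m := by
    have h3 : p ^ ((subsetGcd c k).factorization p) ∣ ∏ j ∈ S₀, c j :=
      (Nat.ordProj_dvd _ p).trans hdvd2
    have hprod : (∏ j ∈ S₀, c j) ≠ 0 := (Finset.prod_pos fun j _ => hc j).ne'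
    have := (Nat.Prime.pow_dvd_iff_le_factorization hp hprod).mp h3
    rwa [factorization_prod_apply c hc S₀ p, hS₀,
      Finset.sum_image fun a _ b _ h => hinj h] at this
  omega

end Prime

end Stmt17Aux

namespace Stmt17Aux

open Finset

lemma lcm_univ_ne_zero {r : ℕ} (c : Fin r → ℕ) (hc : ∀ i, 0 < c i) :
    Finset.univ.lcm c ≠ 0 := by
  intro h
  rcases Finset.lcm_eq_zero_iff.mp h with ⟨i, _, h0⟩
  exact (hc i).ne' h0

lemma factorization_lcm_univ {r' : ℕ} (c : Fin (r' + 1) → ℕ) (hc : ∀ i, 0 < c i) (p : ℕ) :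
    (Finset.univ.lcm c).factorization p = eVal c p (sortPerm c p (Fin.last r')) := by
  set e := eVal c p with he
  set σ := sortPerm c p with hσ
  have hg : Monotone (e ∘ σ) := monotone_sorted c p
  apply le_antisymm
  · apply factorization_lcm_le Finset.univ c (fun i _ => (hc i).ne') p
    intro i _
    have h1 : e i = (e ∘ σ) (σ.symm i) := by simp
    calc (c i).factorization p = e i := rfl
      _ = (e ∘ σ) (σ.symm i) := h1
      _ ≤ (e ∘ σ) (Fin.last r') := hg (Fin.le_last _)
  · have hN0 : Finset.univ.lcm c ≠ 0 := lcm_univ_ne_zero c hc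
    have hdvd : c (σ (Fin.last r')) ∣ Finset.univ.lcm c :=
      Finset.dvd_lcm (Finset.mem_univ _)
    have hle := (Nat.factorization_le_iff_dvd (hc _).ne' hN0).mpr hdvd
    exact Finsupp.le_def.mp hle p

lemma factorization_sVal {r' : ℕ} (c : Fin (r' + 1) → ℕ) (hc : ∀ i, 0 < c i) (p : ℕ)
    (hp : p.Prime) (i : Fin r') :
    (subsetGcd c (i.1 + 1) / subsetGcd c i.1).factorization p
      = eVal c p (sortPerm c p (Fin.castSucc i)) := by
  have h1 : i.1 + 1 ≤ r' + 1 := by omega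
  have h0 : i.1 ≤ r' + 1 := by omega
  have hdvd := subsetGcd_dvd_succ c hc h1
  rw [Nat.factorization_div hdvd, Finsupp.tsub_apply,
    factorization_subsetGcd c p hc hp h1, factorization_subsetGcd c p hc hp h0]
  have hsum : ∑ j : Fin (i.1 + 1), eVal c p (sortPerm c p (Fin.castLE h1 j))
      = (∑ j : Fin i.1, eVal c p (sortPerm c p (Fin.castLE h0 j)))
        + eVal c p (sortPerm c p (Fin.castSucc i)) := by
    rw [Fin.sum_univ_castSucc]
    congr 1
  rw [hsum, Nat.add_sub_cancel_left]

section Equivs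

/-- Transport `ZMod` along an equality. -/
def zmodCongr {m n : ℕ} (h : m = n) : ZMod m ≃+ ZMod n := by subst h; exact AddEquiv.refl _

/-- Split off the last coordinate of a finite product. -/
def piSplitLast {n : ℕ} (M : Fin (n + 1) → Type*) [∀ i, AddZeroClass (M i)] :
    (∀ i, M i) ≃+ M (Fin.last n) × ∀ i : Fin n, M i.castSucc where
  toFun f := (f _, fun i => f _)
  invFun x := Fin.snoc x.2 x.1
  left_inv f := by
    funext i
    induction i using Fin.lastCases with
    | last => simp
    | cast i => simp
  right_inv x := by
    refine Prod.ext ?_ ?_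
    · simp
    · funext i; simp
  map_add' f g := rfl

/-- A product of binary products is the binary product of products. -/
def piProdComm {ι : Type*} (A B : ι → Type*) [∀ i, AddZeroClass (A i)]
    [∀ i, AddZeroClass (B i)] :
    (∀ i, A i × B i) ≃+ (∀ i, A i) × ∀ i, B i where
  toFun f := (fun i => (f i).1, fun i => (f i).2)
  invFun x i := (x.1 i, x.2 i)
  left_inv _ := rfl
  right_inv _ := rfl
  map_add' _ _ := rfl

/-- Additive version of `Equiv.piComm`. -/
def piCommAdd {ι κ : Type*} (M : ι → κ → Type*) [∀ i k, AddZeroClass (M i k)] :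
    (∀ i k, M i k) ≃+ ∀ k i, M i k :=
  { Equiv.piComm M with map_add' := fun _ _ => rfl }

/-- Reindex a dependent product along an equivalence. -/
def piReindex {α β : Type*} (σ : α ≃ β) (M : β → Type*) [∀ b, AddZeroClass (M b)] :
    (∀ b, M b) ≃+ ∀ a, M (σ a) :=
  { Equiv.piCongrLeft' M σ.symm with map_add' := fun _ _ => rfl }

/-- Chinese remainder theorem, with common index set of primes. -/
noncomputable def crtEquiv {n : ℕ} (hn : n ≠ 0) (P : Finset ℕ) (hP : ∀ p ∈ P, p.Prime)
    (hsub : n.primeFactors ⊆ P) :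
    ZMod n ≃+ ∀ p : P, ZMod (p.1 ^ n.factorization p.1) := by
  have hcop : Pairwise (Function.onFun Nat.Coprime fun p : P => p.1 ^ n.factorization p.1) := by
    intro i j hij
    have hi := hP i.1 i.2
    have hj := hP j.1 j.2
    exact Nat.Coprime.pow _ _ ((Nat.coprime_primes hi hj).mpr (fun h => hij (Subtype.ext h)))
  have hprod : n = ∏ p : P, p.1 ^ n.factorization p.1 := by
    rw [Finset.prod_coe_sort P (fun p => p ^ n.factorization p)]
    rw [← Finset.prod_subset hsub (fun p _ hp => by
      rw [Finsupp.notMem_support_iff.mp (by rwa [Nat.support_factorization]), pow_zero])]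
    conv_lhs => rw [← Nat.factorization_prod_pow_eq_self hn]
    rfl
  exact (zmodCongr hprod).trans (ZMod.prodEquivPi _ hcop).toAddEquiv

end Equivs

end Stmt17Aux

open Stmt17Aux in
/-- With `d_i` the gcd of size-`i` products of the `cᵢ` and `N = lcm(cᵢ)`,
`ℤ/N ⊕ ⨁_{i=1}^{r−1} ℤ/(d_i/d_{i−1}) ≅ ⨁_{i=1}^{r} ℤ/cᵢ`. -/
theorem stmt_17 {r : ℕ} (c : Fin r → ℕ) (hc : ∀ i, 0 < c i)
    (N : ℕ) (hN : N = Finset.univ.lcm c) :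
    Nonempty
      ((ZMod N × ∀ i : Fin (r - 1), ZMod (subsetGcd c (i.1 + 1) / subsetGcd c i.1))
        ≃+ (∀ i : Fin r, ZMod (c i))) := by
  subst hN
  cases r with
  | zero =>
    have h1 : (Finset.univ : Finset (Fin 0)).lcm c = 1 := by
      simp [Finset.univ_eq_empty]
    rw [h1]
    haveI hA : Subsingleton (∀ i : Fin (0 - 1), ZMod (subsetGcd c (i.1 + 1) / subsetGcd c i.1)) :=
      ⟨fun a b => funext fun i => i.elim0⟩
    haveI hB : Subsingleton (∀ i : Fin 0, ZMod (c i)) := ⟨fun a b => funext fun i => i.elim0⟩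
    haveI hAB : Subsingleton
        (ZMod 1 × ∀ i : Fin (0 - 1), ZMod (subsetGcd c (i.1 + 1) / subsetGcd c i.1)) :=
      ⟨fun a b => Prod.ext (Subsingleton.elim _ _) (Subsingleton.elim _ _)⟩
    exact ⟨{ toFun := fun _ => 0, invFun := fun _ => 0,
             left_inv := fun x => Subsingleton.elim _ _,
             right_inv := fun x => Subsingleton.elim _ _,
             map_add' := fun _ _ => Subsingleton.elim _ _ }⟩
  | succ r' =>
    have hN0 : (Finset.univ.lcm c : ℕ) ≠ 0 := lcm_univ_ne_zero c hc
    set Nn := Finset.univ.lcm c with hNdef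
    set P := Nn.primeFactors with hPdef
    have hP : ∀ p ∈ P, p.Prime := fun p hp => Nat.prime_of_mem_primeFactors hp
    have hci : ∀ i, c i ≠ 0 := fun i => (hc i).ne'
    have hsubc : ∀ i, (c i).primeFactors ⊆ P := fun i =>
      Nat.primeFactors_mono (Finset.dvd_lcm (Finset.mem_univ i)) hN0
    have hsubN : Nn.primeFactors ⊆ P := subset_rfl
    set s : Fin r' → ℕ := fun i => subsetGcd c (i.1 + 1) / subsetGcd c i.1 with hs
    have hd0 : ∀ i : Fin r', subsetGcd c i.1 ≠ 0 :=
      fun i => subsetGcd_ne_zero c hc (by omega)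
    have hd1 : ∀ i : Fin r', subsetGcd c (i.1 + 1) ≠ 0 :=
      fun i => subsetGcd_ne_zero c hc (by omega)
    have hddvd : ∀ i : Fin r', subsetGcd c i.1 ∣ subsetGcd c (i.1 + 1) :=
      fun i => subsetGcd_dvd_succ c hc (by omega)
    have hs0 : ∀ i, s i ≠ 0 := fun i =>
      (Nat.div_pos (Nat.le_of_dvd (Nat.pos_of_ne_zero (hd1 i)) (hddvd i))
        (Nat.pos_of_ne_zero (hd0 i))).ne'
    have hprodP : (∏ j, c j).primeFactors ⊆ P := by
      intro p hp
      have hpp := Nat.prime_of_mem_primeFactors hp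
      have hpd := Nat.dvd_of_mem_primeFactors hp
      obtain ⟨i, -, hdvd⟩ := (Nat.Prime.prime hpp).exists_mem_finset_dvd hpd
      exact Nat.mem_primeFactors.mpr ⟨hpp, hdvd.trans (Finset.dvd_lcm (Finset.mem_univ i)), hN0⟩
    have hssub : ∀ i, (s i).primeFactors ⊆ P := by
      intro i
      refine (Nat.primeFactors_mono ?_ ((Finset.prod_pos fun j _ => hc j).ne')).trans hprodP
      have h1 : s i ∣ subsetGcd c (i.1 + 1) := Nat.div_dvd_of_dvd (hddvd i)
      obtain ⟨S, hS⟩ := Finset.powersetCard_nonempty.mpr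
        (show i.1 + 1 ≤ (Finset.univ : Finset (Fin (r' + 1))).card by
          rw [Finset.card_univ, Fintype.card_fin]; omega)
      obtain ⟨hSsub, hScard⟩ := Finset.mem_powersetCard.mp hS
      exact h1.trans ((subsetGcd_dvd c hc hScard).trans
        (Finset.prod_dvd_prod_of_subset S Finset.univ c (Finset.subset_univ S)))
    -- the chain of additive equivalences
    let E1 : (∀ i : Fin (r' + 1), ZMod (c i)) ≃+
        ∀ i, ∀ p : P, ZMod (p.1 ^ eVal c p.1 i) :=
      AddEquiv.piCongrRight fun i => crtEquiv (hci i) P hP (hsubc i)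
    let E2 := piCommAdd fun (i : Fin (r' + 1)) (p : P) => ZMod (p.1 ^ eVal c p.1 i)
    let E3 : (∀ p : P, ∀ i, ZMod (p.1 ^ eVal c p.1 i)) ≃+
        ∀ p : P, ∀ i, ZMod (p.1 ^ eVal c p.1 (sortPerm c p.1 i)) :=
      AddEquiv.piCongrRight fun p : P =>
        piReindex (sortPerm c p.1) fun i => ZMod (p.1 ^ eVal c p.1 i)
    let E4 : (∀ p : P, ∀ i, ZMod (p.1 ^ eVal c p.1 (sortPerm c p.1 i))) ≃+
        ∀ p : P, (ZMod (p.1 ^ eVal c p.1 (sortPerm c p.1 (Fin.last r'))) ×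
          ∀ i : Fin r', ZMod (p.1 ^ eVal c p.1 (sortPerm c p.1 i.castSucc))) :=
      AddEquiv.piCongrRight fun p : P =>
        piSplitLast fun i => ZMod (p.1 ^ eVal c p.1 (sortPerm c p.1 i))
    let E5 : (∀ p : P, (ZMod (p.1 ^ eVal c p.1 (sortPerm c p.1 (Fin.last r'))) ×
          ∀ i : Fin r', ZMod (p.1 ^ eVal c p.1 (sortPerm c p.1 i.castSucc)))) ≃+
        ∀ p : P, (ZMod (p.1 ^ Nn.factorization p.1) ×
          ∀ i : Fin r', ZMod (p.1 ^ (s i).factorization p.1)) :=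
      AddEquiv.piCongrRight fun p : P =>
        AddEquiv.prodCongr
          (zmodCongr (congrArg (p.1 ^ ·) (factorization_lcm_univ c hc p.1).symm))
          (AddEquiv.piCongrRight fun i => zmodCongr
            (congrArg (p.1 ^ ·) (factorization_sVal c hc p.1 (hP p.1 p.2) i).symm))
    let E6 := piProdComm (fun p : P => ZMod (p.1 ^ Nn.factorization p.1))
      (fun p : P => ∀ i : Fin r', ZMod (p.1 ^ (s i).factorization p.1))
    let E7 : ((∀ p : P, ZMod (p.1 ^ Nn.factorization p.1)) ×
        ∀ p : P, ∀ i : Fin r', ZMod (p.1 ^ (s i).factorization p.1)) ≃+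
        (ZMod Nn × ∀ i : Fin r', ZMod (s i)) :=
      AddEquiv.prodCongr (crtEquiv hN0 P hP hsubN).symm
        ((piCommAdd fun (p : P) (i : Fin r') => ZMod (p.1 ^ (s i).factorization p.1)).trans
          (AddEquiv.piCongrRight fun i => (crtEquiv (hs0 i) P hP (hssub i)).symm))
    exact ⟨(E1.trans (E2.trans (E3.trans (E4.trans (E5.trans (E6.trans E7)))))).symm⟩
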